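/- If n = k(k+1)/2 is triangular and λ is a partition of n that is a fixed point of the Bulgarian solitaire operator B, then λ = (k, k-1, ..., 2, 1). -/
import Mathlib


/-- A partition of `n`: a multiset of positive integers summing to `n`
(multisets model nonincreasing sequences, since order is irrelevant). -/
def IsPartition (n : ℕ) (l : Multiset ℕ) : Prop :=
  l.sum = n ∧ ∀ x ∈ l, 0 < x

/-- The Bulgarian solitaire move: remove one card from each pile, discard empty
piles, and add a new pile whose size is the number of old piles. -/
def bulg (l : Multiset ℕ) : Multiset ℕ :=
  (Multiset.card l ::ₘ l.map (· - 1)).filter (0 < ·)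

/-- The staircase partition `(k, k-1, …, 2, 1)`. -/
def staircase (k : ℕ) : Multiset ℕ := (Multiset.range k).map (· + 1)

lemma count_map_pred (l : Multiset ℕ) (hl : ∀ x ∈ l, 0 < x) (j : ℕ) :
    Multiset.count j (l.map (· - 1)) = Multiset.count (j + 1) l := by
  rw [Multiset.count_map, Multiset.count_eq_card_filter_eq]
  congr 1
  apply Multiset.filter_congr
  intro x hx
  have := hl x hx
  constructor <;> omega

lemma count_bulg (l : Multiset ℕ) (hl : ∀ x ∈ l, 0 < x) (j : ℕ) (hj : 1 ≤ j) :
    Multiset.count j (bulg l) =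
      Multiset.count (j + 1) l + (if j = Multiset.card l then 1 else 0) := by
  unfold bulg
  rw [Multiset.count_filter, if_pos (show 0 < j from hj), Multiset.count_cons, count_map_pred l hl j]

lemma sum_staircase (c : ℕ) : (staircase c).sum * 2 = c * (c + 1) := by
  induction c with
  | zero => simp [staircase]
  | succ c ih =>
    have : staircase (c + 1) = (c + 1) ::ₘ staircase c := by
      simp [staircase, Multiset.range_succ]
    rw [this, Multiset.sum_cons, add_mul, ih]
    ring

lemma count_staircase (c j : ℕ) :
    Multiset.count j (staircase c) = if 1 ≤ j ∧ j ≤ c then 1 else 0 := by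
  rcases Nat.eq_zero_or_pos j with rfl | hj
  · rw [Multiset.count_eq_zero.2, if_neg (by omega)]
    simp [staircase]
  · obtain ⟨i, rfl⟩ : ∃ i, j = i + 1 := ⟨j - 1, by omega⟩
    unfold staircase
    have hinj : Function.Injective (fun x : ℕ => x + 1) := fun a b h => by simpa using h
    have := Multiset.count_map_eq_count' (fun x : ℕ => x + 1) (Multiset.range c) hinj i
    rw [this]
    by_cases h : i < c
    · rw [Multiset.count_eq_one_of_mem (Multiset.nodup_range c)
        (Multiset.mem_range.2 h), if_pos (by omega)]
    · rw [Multiset.count_eq_zero.2 (fun hm => h (Multiset.mem_range.1 hm)),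
        if_neg (by omega)]

/-- For triangular n = k(k+1)/2, any fixed point of the Bulgarian solitaire
operator among the partitions of n is the staircase partition. -/
theorem bulg_fixed_eq_staircase (k n : ℕ) (hn : n = k * (k + 1) / 2)
    (l : Multiset ℕ) (hl : IsPartition n l) (hfix : bulg l = l) :
    l = staircase k := by
  obtain ⟨hsum, hpos⟩ := hl
  set c := Multiset.card l with hc
  have key : ∀ j, 1 ≤ j →
      Multiset.count j l = Multiset.count (j + 1) l + (if j = c then 1 else 0) := by
    intro j hj
    conv_lhs => rw [← hfix]
    exact count_bulg l hpos j hj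
  have hbd : ∀ j, n < j → Multiset.count j l = 0 := by
    intro j hjn
    rw [Multiset.count_eq_zero]
    intro hm
    have := Multiset.le_sum_of_mem hm
    omega
  have hup : ∀ m j, c < j → Multiset.count j l = Multiset.count (j + m) l := by
    intro m
    induction m with
    | zero => simp
    | succ m ih =>
      intro j hj
      have h1 := key j (by omega)
      rw [if_neg (by omega)] at h1
      have h2 := ih (j + 1) (by omega)
      rw [h1, h2]
      ring_nf
  have hzero : ∀ j, c < j → Multiset.count j l = 0 := by
    intro j hj
    rw [hup (n + 1) j hj]
    exact hbd _ (by omega)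
  have hone : ∀ d, d < c → Multiset.count (c - d) l = 1 := by
    intro d
    induction d with
    | zero =>
      intro hd
      have h1 := key c (by omega)
      rw [if_pos rfl, hzero (c + 1) (by omega)] at h1
      simpa using h1
    | succ d ih =>
      intro hd
      have h1 := key (c - (d + 1)) (by omega)
      rw [if_neg (by omega)] at h1
      have : c - (d + 1) + 1 = c - d := by omega
      rw [this, ih (by omega)] at h1
      simpa using h1
  have hcount : ∀ j, Multiset.count j l = Multiset.count j (staircase c) := by
    intro j
    rw [count_staircase]
    rcases Nat.eq_zero_or_pos j with rfl | hj
    · rw [if_neg (by omega), Multiset.count_eq_zero]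
      intro hm
      exact absurd (hpos 0 hm) (by omega)
    · by_cases hjc : j ≤ c
      · rw [if_pos ⟨hj, hjc⟩]
        have := hone (c - j) (by omega)
        rwa [show c - (c - j) = j by omega] at this
      · rw [if_neg (by omega)]
        exact hzero j (by omega)
  have hls : l = staircase c := Multiset.ext.2 hcount
  have hsc : c * (c + 1) = k * (k + 1) := by
    have h2 : n * 2 = c * (c + 1) := by rw [← hsum, hls, sum_staircase]
    have hk2 : k * (k + 1) / 2 * 2 = k * (k + 1) :=
      Nat.div_mul_cancel (Nat.even_mul_succ_self k).two_dvd
    omega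
  have hck : c = k := by
    rcases lt_trichotomy c k with h | h | h
    · nlinarith
    · exact h
    · nlinarith
  rwa [hck] at hls
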